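/- From every RNFAwtl A one can construct an nr-NFAwtl B with L(B) = L(A); moreover, if A is deterministic then B is deterministic. Hence ℒ(RNFAwtl) ⊆ ℒ(nr-NFAwtl) and ℒ(RDFAwtl) ⊆ ℒ(nr-DFAwtl). -/

import Mathlib

/-- A nondeterministic finite automaton with translucent letters (NFAwtl). -/
structure NFAwtl (Q α : Type) where
  τ : Q → Set α
  I : Set Q
  F : Set Q
  δ : Q → α → Set Q
  tr : ∀ q a, a ∈ τ q → δ q a = ∅

namespace NFAwtl

variable {Q α : Type}

/-- One computation step of an NFAwtl: delete the leftmost non-translucent letter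
and change state (the head returns to the left end). -/
def Step (A : NFAwtl Q α) : Q × List α → Q × List α → Prop := fun c c' =>
  ∃ u a v, c.2 = u ++ a :: v ∧ (∀ x ∈ u, x ∈ A.τ c.1) ∧ a ∉ A.τ c.1 ∧
    c'.1 ∈ A.δ c.1 a ∧ c'.2 = u ++ v

/-- Acceptance: from some initial state, reach a configuration whose remaining
letters are all translucent for a final state. -/
def Accepts (A : NFAwtl Q α) (w : List α) : Prop :=
  ∃ q₀ ∈ A.I, ∃ q w', Relation.ReflTransGen A.Step (q₀, w) (q, w') ∧
    (∀ x ∈ w', x ∈ A.τ q) ∧ q ∈ A.F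

def lang (A : NFAwtl Q α) : Set (List α) := { w | A.Accepts w }

/-- A DFAwtl: single initial state and at most one transition per state/letter. -/
def Deterministic (A : NFAwtl Q α) : Prop :=
  (∃ q₀, A.I = {q₀}) ∧ ∀ q a, (A.δ q a).Subsingleton

end NFAwtl

/-- A repetitive NFAwtl (RNFAwtl): on the end-of-tape marker it may accept
(states in `Facc`) or change state via `δend` and continue. -/
structure RNFAwtl (Q α : Type) where
  τ : Q → Set α
  I : Set Q
  δ : Q → α → Set Q
  δend : Q → Set Q
  Facc : Set Q
  tr : ∀ q a, a ∈ τ q → δ q a = ∅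
  accEnd : ∀ q, q ∈ Facc → δend q = ∅

namespace RNFAwtl

variable {Q α : Type}

/-- One computation step of an RNFAwtl: either delete the leftmost
non-translucent letter, or, when all remaining letters are translucent,
change state via a `◁`-transition and continue. -/
def Step (A : RNFAwtl Q α) : Q × List α → Q × List α → Prop := fun c c' =>
  (∃ u a v, c.2 = u ++ a :: v ∧ (∀ x ∈ u, x ∈ A.τ c.1) ∧ a ∉ A.τ c.1 ∧
    c'.1 ∈ A.δ c.1 a ∧ c'.2 = u ++ v)
  ∨ ((∀ x ∈ c.2, x ∈ A.τ c.1) ∧ c'.1 ∈ A.δend c.1 ∧ c'.2 = c.2)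

def Accepts (A : RNFAwtl Q α) (w : List α) : Prop :=
  ∃ q₀ ∈ A.I, ∃ q w', Relation.ReflTransGen A.Step (q₀, w) (q, w') ∧
    (∀ x ∈ w', x ∈ A.τ q) ∧ q ∈ A.Facc

def lang (A : RNFAwtl Q α) : Set (List α) := { w | A.Accepts w }

/-- An RDFAwtl: single initial state and deterministic transitions. -/
def Deterministic (A : RNFAwtl Q α) : Prop :=
  (∃ q₀, A.I = {q₀}) ∧ (∀ q a, (A.δ q a).Subsingleton) ∧ ∀ q, (A.δend q).Subsingleton

end RNFAwtl

/-- A non-returning repetitive NFAwtl (nr-NFAwtl): the head continues from the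
position of the last deleted letter; on the end-of-tape marker it may change
state and return the head to the left end. -/
structure NrNFAwtl (Q α : Type) where
  τ : Q → Set α
  I : Set Q
  δ : Q → α → Set Q
  δend : Q → Set Q
  Facc : Set Q
  tr : ∀ q a, a ∈ τ q → δ q a = ∅
  accEnd : ∀ q, q ∈ Facc → δend q = ∅

namespace NrNFAwtl

variable {Q α : Type}

/-- Configurations are `(x, q, w)`: `x` is the already-skipped prefix, the head
is on the first letter of `w`. -/
def Step (A : NrNFAwtl Q α) :
    List α × Q × List α → List α × Q × List α → Prop := fun c c' =>
  (∃ u a v, c.2.2 = u ++ a :: v ∧ (∀ x ∈ u, x ∈ A.τ c.2.1) ∧ a ∉ A.τ c.2.1 ∧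
    c'.2.1 ∈ A.δ c.2.1 a ∧ c'.1 = c.1 ++ u ∧ c'.2.2 = v)
  ∨ ((∀ x ∈ c.2.2, x ∈ A.τ c.2.1) ∧ c'.2.1 ∈ A.δend c.2.1 ∧ c'.1 = [] ∧
    c'.2.2 = c.1 ++ c.2.2)

def Accepts (A : NrNFAwtl Q α) (w : List α) : Prop :=
  ∃ q₀ ∈ A.I, ∃ x q w', Relation.ReflTransGen A.Step ([], q₀, w) (x, q, w') ∧
    (∀ y ∈ w', y ∈ A.τ q) ∧ q ∈ A.Facc

def lang (A : NrNFAwtl Q α) : Set (List α) := { w | A.Accepts w }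

def Deterministic (A : NrNFAwtl Q α) : Prop :=
  (∃ q₀, A.I = {q₀}) ∧ (∀ q a, (A.δ q a).Subsingleton) ∧ ∀ q, (A.δend q).Subsingleton

end NrNFAwtl

/-- A non-repetitive non-returning NFAwtl (nr-nr-NFAwtl): non-returning, and it
must halt as soon as all remaining letters to the right are translucent. -/
structure NrnrNFAwtl (Q α : Type) where
  τ : Q → Set α
  I : Set Q
  F : Set Q
  δ : Q → α → Set Q
  tr : ∀ q a, a ∈ τ q → δ q a = ∅

namespace NrnrNFAwtl

variable {Q α : Type}

def Step (A : NrnrNFAwtl Q α) :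
    List α × Q × List α → List α × Q × List α → Prop := fun c c' =>
  ∃ u a v, c.2.2 = u ++ a :: v ∧ (∀ x ∈ u, x ∈ A.τ c.2.1) ∧ a ∉ A.τ c.2.1 ∧
    c'.2.1 ∈ A.δ c.2.1 a ∧ c'.1 = c.1 ++ u ∧ c'.2.2 = v

def Accepts (A : NrnrNFAwtl Q α) (w : List α) : Prop :=
  ∃ q₀ ∈ A.I, ∃ x q w', Relation.ReflTransGen A.Step ([], q₀, w) (x, q, w') ∧
    (∀ y ∈ w', y ∈ A.τ q) ∧ q ∈ A.F

def lang (A : NrnrNFAwtl Q α) : Set (List α) := { w | A.Accepts w }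

def Deterministic (A : NrnrNFAwtl Q α) : Prop :=
  (∃ q₀, A.I = {q₀}) ∧ ∀ q a, (A.δ q a).Subsingleton

end NrnrNFAwtl

/-- Language classes. -/
def NFAwtlLangs (α : Type) [Fintype α] : Set (Set (List α)) :=
  { L | ∃ (Q : Type) (_ : Fintype Q) (A : NFAwtl Q α), A.lang = L }

def DFAwtlLangs (α : Type) [Fintype α] : Set (Set (List α)) :=
  { L | ∃ (Q : Type) (_ : Fintype Q) (A : NFAwtl Q α), A.Deterministic ∧ A.lang = L }

def RNFAwtlLangs (α : Type) [Fintype α] : Set (Set (List α)) :=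
  { L | ∃ (Q : Type) (_ : Fintype Q) (A : RNFAwtl Q α), A.lang = L }

def RDFAwtlLangs (α : Type) [Fintype α] : Set (Set (List α)) :=
  { L | ∃ (Q : Type) (_ : Fintype Q) (A : RNFAwtl Q α), A.Deterministic ∧ A.lang = L }

def NrNFAwtlLangs (α : Type) [Fintype α] : Set (Set (List α)) :=
  { L | ∃ (Q : Type) (_ : Fintype Q) (A : NrNFAwtl Q α), A.lang = L }

def NrDFAwtlLangs (α : Type) [Fintype α] : Set (Set (List α)) :=
  { L | ∃ (Q : Type) (_ : Fintype Q) (A : NrNFAwtl Q α), A.Deterministic ∧ A.lang = L }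

def NrnrNFAwtlLangs (α : Type) [Fintype α] : Set (Set (List α)) :=
  { L | ∃ (Q : Type) (_ : Fintype Q) (A : NrnrNFAwtl Q α), A.lang = L }

def NrnrDFAwtlLangs (α : Type) [Fintype α] : Set (Set (List α)) :=
  { L | ∃ (Q : Type) (_ : Fintype Q) (A : NrnrNFAwtl Q α), A.Deterministic ∧ A.lang = L }

/-- The three-letter alphabet {a, b, c}. -/
inductive Al : Type
  | a | b | c
deriving DecidableEq

instance : Fintype Al :=
  ⟨{Al.a, Al.b, Al.c}, fun x => by cases x <;> simp⟩

section ToNr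

open Relation

variable {Q α : Type}

/-- The non-returning simulator of an RNFAwtl: each state `q` is doubled into
`inl q` and an auxiliary `inr q` for which every letter is translucent. -/
def RNFAwtl.toNr (A : RNFAwtl Q α) : NrNFAwtl (Q ⊕ Q) α where
  τ := fun q => match q with | .inl q => A.τ q | .inr _ => Set.univ
  I := Sum.inl '' A.I
  δ := fun q a => match q with | .inl q => Sum.inr '' A.δ q a | .inr _ => ∅
  δend := fun q => match q with
    | .inl q => Sum.inl '' A.δend q
    | .inr p => {Sum.inl p}
  Facc := Sum.inl '' A.Facc
  tr := by
    rintro (q | q) a h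
    · simp only
      rw [A.tr q a h]
      simp
    · rfl
  accEnd := by
    rintro (q | q) ⟨p, hp, hpq⟩
    · cases hpq
      simp only
      rw [A.accEnd _ hp]
      simp
    · exact absurd hpq (by simp)

lemma RNFAwtl.toNr_fwd_step (A : RNFAwtl Q α) {c c' : Q × List α} (h : A.Step c c') :
    ReflTransGen A.toNr.Step ([], Sum.inl c.1, c.2) ([], Sum.inl c'.1, c'.2) := by
  rcases h with ⟨u, a, v, hw, hu, ha, hδ, hw'⟩ | ⟨hall, hδ, hw'⟩
  · refine ReflTransGen.head (b := (u, Sum.inr c'.1, v)) ?_ (ReflTransGen.single ?_)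
    · exact Or.inl ⟨u, a, v, hw, hu, ha, ⟨c'.1, hδ, rfl⟩, by simp, rfl⟩
    · exact Or.inr ⟨fun x _ => trivial, rfl, rfl, hw'⟩
  · refine ReflTransGen.single (Or.inr ⟨hall, ⟨c'.1, hδ, rfl⟩, rfl, by simpa⟩)

lemma RNFAwtl.toNr_fwd (A : RNFAwtl Q α) {c c' : Q × List α}
    (h : ReflTransGen A.Step c c') :
    ReflTransGen A.toNr.Step ([], Sum.inl c.1, c.2) ([], Sum.inl c'.1, c'.2) := by
  induction h with
  | refl => exact ReflTransGen.refl
  | tail _ hstep ih => exact ih.trans (A.toNr_fwd_step hstep)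

lemma RNFAwtl.toNr_bwd (A : RNFAwtl Q α) {q₀ : Q} {w : List α}
    {c : List α × (Q ⊕ Q) × List α}
    (h : ReflTransGen A.toNr.Step ([], Sum.inl q₀, w) c) :
    (∃ q, c.1 = [] ∧ c.2.1 = Sum.inl q ∧ ReflTransGen A.Step (q₀, w) (q, c.2.2)) ∨
    (∃ p, c.2.1 = Sum.inr p ∧ ReflTransGen A.Step (q₀, w) (p, c.1 ++ c.2.2)) := by
  induction h with
  | refl => exact Or.inl ⟨q₀, rfl, rfl, ReflTransGen.refl⟩
  | tail _ hstep ih =>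
    rename_i b c _
    rcases ih with ⟨q, hb1, hb2, hAB⟩ | ⟨p, hb2, hAB⟩
    · rcases hstep with ⟨u, a, v, hw, hu, ha, hδ, hc1, hc2⟩ | ⟨hall, hδ, hc1, hc2⟩
      · rw [hb2] at hu ha hδ
        obtain ⟨p, hp, hps⟩ := hδ
        refine Or.inr ⟨p, hps.symm, ReflTransGen.tail hAB ?_⟩
        rw [hc1, hb1, hc2, List.nil_append]
        exact Or.inl ⟨u, a, v, hw, hu, ha, hp, rfl⟩
      · rw [hb2] at hall hδ
        obtain ⟨p, hp, hps⟩ := hδ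
        refine Or.inl ⟨p, hc1, hps.symm, ReflTransGen.tail hAB ?_⟩
        rw [hc2, hb1, List.nil_append]
        exact Or.inr ⟨hall, hp, rfl⟩
    · rcases hstep with ⟨u, a, v, hw, hu, ha, hδ, hc1, hc2⟩ | ⟨hall, hδ, hc1, hc2⟩
      · rw [hb2] at ha
        exact absurd trivial ha
      · rw [hb2] at hδ
        simp only [RNFAwtl.toNr, Set.mem_singleton_iff] at hδ
        refine Or.inl ⟨p, hc1, hδ, ?_⟩
        rwa [hc2]

lemma RNFAwtl.toNr_lang (A : RNFAwtl Q α) : A.toNr.lang = A.lang := by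
  ext w
  constructor
  · rintro ⟨q₀', hq₀', x, q', w', hrt, htr, hF⟩
    obtain ⟨q₀, hq₀, rfl⟩ := hq₀'
    obtain ⟨qf, hqf, rfl⟩ := hF
    rcases A.toNr_bwd hrt with ⟨q, hx, hq, hAB⟩ | ⟨p, hq, _⟩
    · simp only [Sum.inl.injEq] at hq
      subst hq
      exact ⟨q₀, hq₀, qf, w', hAB, htr, hqf⟩
    · exact absurd hq (by simp)
  · rintro ⟨q₀, hq₀, q, w', hrt, htr, hF⟩
    exact ⟨Sum.inl q₀, ⟨q₀, hq₀, rfl⟩, [], Sum.inl q, w', A.toNr_fwd hrt, htr,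
      ⟨q, hF, rfl⟩⟩

lemma RNFAwtl.toNr_det (A : RNFAwtl Q α) (h : A.Deterministic) :
    A.toNr.Deterministic := by
  obtain ⟨⟨q₀, hq₀⟩, hδ, hδe⟩ := h
  refine ⟨⟨Sum.inl q₀, by rw [RNFAwtl.toNr]; simp [hq₀]⟩, ?_, ?_⟩
  · rintro (q | q) a
    · exact (hδ q a).image _
    · exact Set.subsingleton_empty
  · rintro (q | q)
    · exact (hδe q).image _
    · exact Set.subsingleton_singleton

end ToNr

/-- every RNFAwtl can be converted into an equivalent nr-NFAwtl,
preserving determinism; hence ℒ(RNFAwtl) ⊆ ℒ(nr-NFAwtl) and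
ℒ(RDFAwtl) ⊆ ℒ(nr-DFAwtl). -/
theorem RNFAwtl_to_nrNFAwtl (α : Type) [Fintype α] :
    (∀ (Q : Type) [Fintype Q] (A : RNFAwtl Q α),
      ∃ (Q' : Type) (_ : Fintype Q') (B : NrNFAwtl Q' α),
        B.lang = A.lang ∧ (A.Deterministic → B.Deterministic)) ∧
    RNFAwtlLangs α ⊆ NrNFAwtlLangs α ∧ RDFAwtlLangs α ⊆ NrDFAwtlLangs α := by
  refine ⟨fun Q _ A => ⟨Q ⊕ Q, inferInstance, A.toNr, A.toNr_lang, A.toNr_det⟩, ?_, ?_⟩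
  · rintro L ⟨Q, _, A, rfl⟩
    exact ⟨Q ⊕ Q, inferInstance, A.toNr, A.toNr_lang⟩
  · rintro L ⟨Q, _, A, hd, rfl⟩
    exact ⟨Q ⊕ Q, inferInstance, A.toNr, A.toNr_det hd, A.toNr_lang⟩
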